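/- Let z > 0, z ≠ 1, 0 ≤ τ < α ≤ 1, and let F(x) = (∫_τ^x s z^s ds)/(∫_τ^α s z^s ds) for x ∈ (τ, α). If z > 1 then F^{-1}(y) = (W_0(c(y)/e) + 1)/log z, and if z < 1 then F^{-1}(y) = (W_{−1}(c(y)/e) + 1)/log z, where c(y) = (z^τ − z^α + (α z^α − τ z^τ) log z) y − z^τ + τ z^τ log z and W_k is the k-th real branch of the Lambert W function. -/

import Mathlib

open Real intervalIntegral

/-- CDF of the density p(s|t) ∝ s z^s on (τ, α). -/
noncomputable def Fcdf (z τ α x : ℝ) : ℝ :=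
  (∫ s in τ..x, s * z ^ s) / (∫ s in τ..α, s * z ^ s)

/-- The constant c(y) appearing in the inverse CDF. -/
noncomputable def cInv (z τ α y : ℝ) : ℝ :=
  (z ^ τ - z ^ α + (α * z ^ α - τ * z ^ τ) * Real.log z) * y
    - z ^ τ + τ * z ^ τ * Real.log z

lemma contInteg {z : ℝ} (hz : 0 < z) : Continuous (fun s : ℝ => s * z ^ s) := by
  have : Continuous (fun s : ℝ => z ^ s) := by
    have : (fun s : ℝ => z ^ s) = fun s => Real.exp (Real.log z * s) := by
      funext s; rw [Real.rpow_def_of_pos hz]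
    rw [this]; exact Real.continuous_exp.comp (continuous_const.mul continuous_id)
  exact continuous_id.mul this

lemma hasDerivG {z : ℝ} (hz : 0 < z) (hL : Real.log z ≠ 0) (s : ℝ) :
    HasDerivAt (fun s => z ^ s * (s * Real.log z - 1) / (Real.log z) ^ 2)
      (s * z ^ s) s := by
  have h1 : HasDerivAt (fun s : ℝ => z ^ s) (z ^ s * Real.log z) s :=
    (Real.hasStrictDerivAt_const_rpow hz s).hasDerivAt
  have h2 : HasDerivAt (fun s : ℝ => s * Real.log z - 1) (Real.log z) s := by
    simpa using ((hasDerivAt_id s).mul_const (Real.log z)).sub_const 1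
  have h3 := (h1.fun_mul h2).div_const ((Real.log z) ^ 2)
  refine h3.congr_deriv ?_
  rw [div_eq_iff (pow_ne_zero 2 hL)]
  ring

lemma integ {z : ℝ} (hz : 0 < z) (hL : Real.log z ≠ 0) (a b : ℝ) :
    (∫ s in a..b, s * z ^ s)
      = z ^ b * (b * Real.log z - 1) / (Real.log z) ^ 2
        - z ^ a * (a * Real.log z - 1) / (Real.log z) ^ 2 := by
  exact intervalIntegral.integral_eq_sub_of_hasDerivAt
    (fun s _ => hasDerivG hz hL s) ((contInteg hz).intervalIntegrable a b)

lemma muexp_injOn_ge : Set.InjOn (fun t : ℝ => t * Real.exp t) (Set.Ici (-1)) := by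
  have h : StrictMonoOn (fun t : ℝ => t * Real.exp t) (Set.Ici (-1)) := by
    apply strictMonoOn_of_deriv_pos (convex_Ici _)
    · exact (continuous_id.mul Real.continuous_exp).continuousOn
    · intro t ht
      rw [interior_Ici] at ht
      have hd : HasDerivAt (fun t : ℝ => t * Real.exp t) (Real.exp t + t * Real.exp t) t := by
        simpa using (hasDerivAt_id t).fun_mul (Real.hasDerivAt_exp t)
      rw [hd.deriv]
      have h1 : -1 < t := ht.out
      nlinarith [Real.exp_pos t]
  exact h.injOn

lemma muexp_injOn_le : Set.InjOn (fun t : ℝ => t * Real.exp t) (Set.Iic (-1)) := by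
  have h : StrictAntiOn (fun t : ℝ => t * Real.exp t) (Set.Iic (-1)) := by
    apply strictAntiOn_of_deriv_neg (convex_Iic _)
    · exact (continuous_id.mul Real.continuous_exp).continuousOn
    · intro t ht
      rw [interior_Iic] at ht
      have hd : HasDerivAt (fun t : ℝ => t * Real.exp t) (Real.exp t + t * Real.exp t) t := by
        simpa using (hasDerivAt_id t).fun_mul (Real.hasDerivAt_exp t)
      rw [hd.deriv]
      have h1 : t < -1 := ht.out
      nlinarith [Real.exp_pos t]
  exact h.injOn

/-- The inverse CDF is expressed via the Lambert W function: `w` is the value of the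
appropriate real branch of the Lambert W function at `c(y)/e` (branch `W₀`, i.e. `w ≥ -1`,
when `z > 1`; branch `W₋₁`, i.e. `w ≤ -1`, when `z < 1`), characterized by `w * exp w = c(y)/e`. -/
theorem stmt_16 (z τ α : ℝ) (hz : 0 < z) (hz1 : z ≠ 1)
    (h0 : 0 ≤ τ) (h1 : τ < α) (h2 : α ≤ 1)
    (x y w : ℝ) (hx : x ∈ Set.Ioo τ α) (hy : y = Fcdf z τ α x)
    (hw : w * Real.exp w = cInv z τ α y / Real.exp 1)
    (hbranch : (1 < z → -1 ≤ w) ∧ (z < 1 → w ≤ -1)) :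
    x = (w + 1) / Real.log z := by
  set L := Real.log z with hLdef
  have hL : L ≠ 0 := Real.log_ne_zero_of_pos_of_ne_one hz hz1
  have hxpos : 0 < x := lt_of_le_of_lt h0 hx.1
  -- denominator positive
  have hD : 0 < ∫ s in τ..α, s * z ^ s := by
    apply intervalIntegral.intervalIntegral_pos_of_pos_on
      ((contInteg hz).intervalIntegrable τ α)
    · intro s hs
      have hs0 : 0 < s := lt_of_le_of_lt h0 hs.1
      have : (0:ℝ) < z ^ s := Real.rpow_pos_of_pos hz s
      positivity
    · exact h1
  rw [integ hz hL τ α] at hD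
  have hD2 : 0 < z ^ α * (α * L - 1) - z ^ τ * (τ * L - 1) := by
    have heq : z ^ α * (α * L - 1) - z ^ τ * (τ * L - 1)
        = L ^ 2 * (z ^ α * (α * L - 1) / L ^ 2 - z ^ τ * (τ * L - 1) / L ^ 2) := by
      field_simp
    rw [heq]
    have hL2 : 0 < L ^ 2 := by positivity
    exact mul_pos hL2 hD
  have hy' : y = (z ^ x * (x * L - 1) - z ^ τ * (τ * L - 1))
      / (z ^ α * (α * L - 1) - z ^ τ * (τ * L - 1)) := by
    rw [hy]; unfold Fcdf
    rw [integ hz hL τ x, integ hz hL τ α]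
    rw [div_sub_div_same, div_sub_div_same]
    rw [div_div_div_cancel_right₀ (pow_ne_zero 2 hL)]
  -- key identity: cInv z τ α y = z ^ x * (x * L - 1)
  have hc : cInv z τ α y = z ^ x * (x * L - 1) := by
    unfold cInv
    rw [hy']
    field_simp
    ring
  -- rewrite hw
  have hzx : z ^ x = Real.exp (x * L) := by
    rw [Real.rpow_def_of_pos hz, mul_comm]
  have hw' : w * Real.exp w = (x * L - 1) * Real.exp (x * L - 1) := by
    rw [hw, hc, hzx, Real.exp_sub]
    ring
  rcases lt_or_gt_of_ne hz1 with hlt | hgt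
  · -- z < 1, L < 0
    have hLneg : L < 0 := Real.log_neg hz hlt
    have hu : x * L - 1 ≤ -1 := by nlinarith
    have hwle : w ≤ -1 := hbranch.2 hlt
    have := muexp_injOn_le hwle hu hw'
    rw [this]
    field_simp
    ring
  · -- z > 1, L > 0
    have hLpos : 0 < L := Real.log_pos hgt
    have hu : -1 ≤ x * L - 1 := by nlinarith
    have hwge : -1 ≤ w := hbranch.1 hgt
    have := muexp_injOn_ge hwge hu hw'
    rw [this]
    field_simp
    ring
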